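/- Every solution x : [t₀, ∞) → ℝⁿ of the masked average-consensus system is bounded: there exists M (depending on the solution) such that ‖x(t)‖ ≤ M for all t ≥ t₀. -/

import Mathlib

open Set Filter Topology Matrix

/-- Right-hand side of the masked average-consensus system
`ẋ = -L (I + Φ e^{-Σ t}) (x + e^{-Δ t} γ)`, written componentwise through the
diagonal matrices `Φ = diag φ`, `Σ = diag σ`, `Δ = diag δ`. -/
noncomputable def maskedConsensusRHS {n : ℕ} (L : Matrix (Fin n) (Fin n) ℝ)
    (φ σ δ γ : Fin n → ℝ) (t : ℝ) (x : Fin n → ℝ) : Fin n → ℝ :=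
  -(L.mulVec (fun i => (1 + φ i * Real.exp (-σ i * t)) * (x i + Real.exp (-δ i * t) * γ i)))

set_option maxHeartbeats 2000000 in
/-- **Boundedness of the trajectories of the masked system (from the proof of
Theorem 1).** Every solution `x : [t₀, ∞) → ℝⁿ` of the masked average-consensus
system `ẋ = -L (I + Φ e^{-Σ t}) (x + e^{-Δ t} γ)` — with `L` an irreducible
weight-balanced Laplacian (`L𝟙 = Lᵀ𝟙 = 0`, `wᵀ(L+Lᵀ)w > 0` for nonzero `w ⊥ 𝟙`)
and `φᵢ, σᵢ, δᵢ > 0` — is bounded: `‖x(t)‖ ≤ M` for all `t ≥ t₀`, for some `M`. -/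
theorem masked_consensus_solutions_bounded
    (n : ℕ) (hn : 2 ≤ n) (L : Matrix (Fin n) (Fin n) ℝ) (φ σ δ γ : Fin n → ℝ)
    (hL1 : L.mulVec (fun _ => (1 : ℝ)) = 0)
    (hLT1 : L.transpose.mulVec (fun _ => (1 : ℝ)) = 0)
    (hLpos : ∀ w : Fin n → ℝ, w ≠ 0 → (∑ i, w i) = 0 →
      0 < dotProduct w ((L + L.transpose).mulVec w))
    (hφ : ∀ i, 0 < φ i) (hσ : ∀ i, 0 < σ i) (hδ : ∀ i, 0 < δ i)
    (t₀ : ℝ) (ht₀ : 0 ≤ t₀) (x : ℝ → Fin n → ℝ)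
    (hsol : ∀ t ∈ Set.Ici t₀, HasDerivAt x (maskedConsensusRHS L φ σ δ γ t (x t)) t) :
    ∃ M : ℝ, ∀ t ∈ Set.Ici t₀, ‖x t‖ ≤ M := by
  have hn0 : 0 < n := by omega
  haveI : Nonempty (Fin n) := ⟨⟨0, hn0⟩⟩
  have hne : (Finset.univ : Finset (Fin n)).Nonempty := Finset.univ_nonempty
  -- decay rate c and bound φM on the φᵢ
  set c : ℝ := Finset.univ.inf' hne (fun i => min (σ i) (δ i)) with hcdef
  have hcσ : ∀ i, c ≤ σ i := fun i =>
    le_trans (Finset.inf'_le _ (Finset.mem_univ i)) (min_le_left _ _)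
  have hcδ : ∀ i, c ≤ δ i := fun i =>
    le_trans (Finset.inf'_le _ (Finset.mem_univ i)) (min_le_right _ _)
  have hcpos : 0 < c := by
    obtain ⟨i, -, hi⟩ := Finset.exists_mem_eq_inf' hne (fun i => min (σ i) (δ i))
    rw [hcdef, hi]; exact lt_min (hσ i) (hδ i)
  set φM : ℝ := Finset.univ.sup' hne φ with hφMdef
  have hφM : ∀ i, φ i ≤ φM := fun i => Finset.le_sup' _ (Finset.mem_univ i)
  have hφM0 : 0 ≤ φM := le_trans (hφ ⟨0, hn0⟩).le (hφM _)
  -- componentwise derivatives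
  have hcomp : ∀ t ∈ Set.Ici t₀, ∀ i,
      HasDerivAt (fun s => x s i) (maskedConsensusRHS L φ σ δ γ t (x t) i) t :=
    fun t ht i => (hasDerivAt_pi.1 (hsol t ht)) i
  -- column sums and row sums of L vanish
  have hcol : ∀ j, ∑ i, L i j = 0 := by
    intro j
    have h := congrFun hLT1 j
    simpa [Matrix.mulVec, dotProduct, Matrix.transpose_apply] using h
  have hrow : ∀ i, ∑ j, L i j = 0 := by
    intro i
    have h := congrFun hL1 i
    simpa [Matrix.mulVec, dotProduct] using h
  -- the total sum is conserved
  have hSderiv : ∀ t ∈ Set.Ici t₀, HasDerivAt (fun s => ∑ i, x s i) 0 t := by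
    intro t ht
    have h := HasDerivAt.fun_sum (fun i (_ : i ∈ Finset.univ) => hcomp t ht i)
    refine h.congr_deriv (Eq.symm ?_)
    unfold maskedConsensusRHS
    simp only [Pi.neg_apply, Matrix.mulVec, dotProduct]
    rw [Finset.sum_neg_distrib, Finset.sum_comm]
    rw [show (∑ j, ∑ i, L i j *
        ((1 + φ j * Real.exp (-σ j * t)) * (x t j + Real.exp (-δ j * t) * γ j)))
        = ∑ j, (∑ i, L i j) *
        ((1 + φ j * Real.exp (-σ j * t)) * (x t j + Real.exp (-δ j * t) * γ j)) from
      Finset.sum_congr rfl fun j _ => (Finset.sum_mul _ _ _).symm]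
    simp [hcol]
  have hSconst : ∀ t ∈ Set.Ici t₀, (∑ i, x t i) = ∑ i, x t₀ i := by
    intro t ht
    have h := constant_of_has_deriv_right_zero (f := fun s => ∑ i, x s i) (a := t₀) (b := t)
      (fun s hs => (hSderiv s hs.1).continuousAt.continuousWithinAt)
      (fun s hs => (hSderiv s hs.1).hasDerivWithinAt)
    exact h t (right_mem_Icc.2 ht)
  -- consensus value η and candidate Lyapunov ingredients
  set η : ℝ := (∑ i, x t₀ i) / n with hηdef
  have hsumw : ∀ t ∈ Set.Ici t₀, ∑ i, (x t i - η) = 0 := by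
    intro t ht
    rw [Finset.sum_sub_distrib, hSconst t ht, Finset.sum_const, Finset.card_univ,
      Fintype.card_fin, nsmul_eq_mul, hηdef]
    field_simp
    ring
  set U : ℝ → ℝ := fun s => ∑ i, (x s i - η) ^ 2 with hUdef
  have hU0 : ∀ s, 0 ≤ U s := fun s => Finset.sum_nonneg fun i _ => sq_nonneg _
  set F : ℝ → Fin n → ℝ := fun t => maskedConsensusRHS L φ σ δ γ t (x t) with hFdef
  have hUderiv : ∀ t ∈ Set.Ici t₀,
      HasDerivAt U (∑ i, 2 * (x t i - η) * F t i) t := by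
    intro t ht
    have h := HasDerivAt.fun_sum (fun i (_ : i ∈ Finset.univ) =>
      (((hcomp t ht i).sub_const η).pow 2))
    refine h.congr_deriv (Eq.symm ?_)
    apply Finset.sum_congr rfl
    intro i _
    push_cast
    ring
  -- key quantitative data
  set Ksum : ℝ := ∑ i, ∑ j, |L i j| * (φM + φM * |η| + (1 + φM) * |γ j|) with hKsumdef
  have hKsum0 : 0 ≤ Ksum := by
    rw [hKsumdef]
    apply Finset.sum_nonneg
    intro i _
    apply Finset.sum_nonneg
    intro j _
    positivity
  set K : ℝ := 2 * Ksum with hKdef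
  have hK0 : 0 ≤ K := by rw [hKdef]; linarith
  -- quadratic form nonnegativity on sum-zero vectors
  have hq : ∀ u : Fin n → ℝ, (∑ i, u i) = 0 → 0 ≤ ∑ i, u i * (L.mulVec u) i := by
    intro u hu
    rcases eq_or_ne u 0 with rfl | hu0
    · simp
    · have h := hLpos u hu0 hu
      have key : dotProduct u ((L + L.transpose).mulVec u)
          = 2 * ∑ i, u i * (L.mulVec u) i := by
        have e1 : dotProduct u ((L + L.transpose).mulVec u)
            = ∑ i, ∑ j, (u i * (L i j * u j) + u i * (L j i * u j)) := by
          simp only [dotProduct, Matrix.mulVec, Matrix.add_apply,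
            Matrix.transpose_apply]
          apply Finset.sum_congr rfl
          intro i _
          rw [Finset.mul_sum]
          apply Finset.sum_congr rfl
          intro j _
          ring
        have e2 : (∑ i, ∑ j, u i * (L j i * u j)) = ∑ i, ∑ j, u i * (L i j * u j) := by
          conv_lhs => rw [Finset.sum_comm]
          apply Finset.sum_congr rfl
          intro i _
          apply Finset.sum_congr rfl
          intro j _
          ring
        have e3 : (∑ i, u i * (L.mulVec u) i) = ∑ i, ∑ j, u i * (L i j * u j) := by
          apply Finset.sum_congr rfl
          intro i _
          simp only [Matrix.mulVec, dotProduct]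
          rw [Finset.mul_sum]
        rw [e1, e3]
        simp only [Finset.sum_add_distrib]
        rw [e2]
        ring
      linarith [key ▸ h]
  -- the central differential inequality
  have hkey : ∀ t ∈ Set.Ici t₀,
      (∑ i, 2 * (x t i - η) * F t i) ≤ K * Real.exp (-c * t) * (U t + 1) := by
    intro t ht
    have ht0 : 0 ≤ t := le_trans ht₀ ht
    set w : Fin n → ℝ := fun i => x t i - η with hwdef
    set r : Fin n → ℝ := fun j => φ j * Real.exp (-σ j * t) * x t j
      + (1 + φ j * Real.exp (-σ j * t)) * (Real.exp (-δ j * t) * γ j) with hrdef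
    set v : Fin n → ℝ := fun j =>
      (1 + φ j * Real.exp (-σ j * t)) * (x t j + Real.exp (-δ j * t) * γ j) with hvdef
    have hFt : F t = -(L.mulVec v) := rfl
    -- decomposition of the masked vector
    have hvsplit : ∀ j, v j = w j + η + r j := by
      intro j
      simp only [hvdef, hwdef, hrdef]
      ring
    have hmv : ∀ i, (L.mulVec v) i = (L.mulVec w) i + (L.mulVec r) i := by
      intro i
      simp only [Matrix.mulVec, dotProduct]
      have : ∀ j ∈ Finset.univ, L i j * v j = L i j * w j + L i j * η + L i j * r j := by
        intro j _
        rw [hvsplit j]; ring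
      rw [Finset.sum_congr rfl this, Finset.sum_add_distrib, Finset.sum_add_distrib,
        ← Finset.sum_mul, hrow i, zero_mul, add_zero]
    -- rewrite the derivative of U
    have hD : (∑ i, 2 * (x t i - η) * F t i)
        = -2 * (∑ i, w i * (L.mulVec w) i) + (-2) * (∑ i, w i * (L.mulVec r) i) := by
      rw [Finset.mul_sum, Finset.mul_sum, ← Finset.sum_add_distrib]
      apply Finset.sum_congr rfl
      intro i _
      rw [hFt]
      simp only [Pi.neg_apply, hmv i, hwdef]
      ring
    rw [hD]
    -- first term is nonpositive
    have h1 : 0 ≤ ∑ i, w i * (L.mulVec w) i := hq w (hsumw t ht)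
    -- bound on r
    have hexpc : ∀ j, Real.exp (-σ j * t) ≤ Real.exp (-c * t) := by
      intro j
      apply Real.exp_le_exp.2
      have := mul_le_mul_of_nonneg_right (hcσ j) ht0
      linarith
    have hexpd : ∀ j, Real.exp (-δ j * t) ≤ Real.exp (-c * t) := by
      intro j
      apply Real.exp_le_exp.2
      have := mul_le_mul_of_nonneg_right (hcδ j) ht0
      linarith
    have hexp1 : ∀ j, Real.exp (-σ j * t) ≤ 1 := by
      intro j
      apply Real.exp_le_one_iff.2
      have := mul_nonneg (hσ j).le ht0
      linarith
    have hec0 : 0 < Real.exp (-c * t) := Real.exp_pos _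
    have hrb : ∀ j, |r j| ≤ Real.exp (-c * t) * (φM * (|w j| + |η|) + (1 + φM) * |γ j|) := by
      intro j
      have hxj : |x t j| ≤ |w j| + |η| := by
        have : x t j = w j + η := by simp [hwdef]
        rw [this]; exact abs_add_le _ _
      have e1 : |φ j * Real.exp (-σ j * t) * x t j| ≤ Real.exp (-c * t) * (φM * |x t j|) := by
        rw [abs_mul, abs_mul, abs_of_pos (hφ j), abs_of_pos (Real.exp_pos _)]
        calc φ j * Real.exp (-σ j * t) * |x t j|
            ≤ φM * Real.exp (-c * t) * |x t j| := by
              apply mul_le_mul_of_nonneg_right _ (abs_nonneg _)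
              exact mul_le_mul (hφM j) (hexpc j) (Real.exp_pos _).le hφM0
          _ = Real.exp (-c * t) * (φM * |x t j|) := by ring
      have e2 : |(1 + φ j * Real.exp (-σ j * t)) * (Real.exp (-δ j * t) * γ j)|
          ≤ Real.exp (-c * t) * ((1 + φM) * |γ j|) := by
        rw [abs_mul, abs_mul, abs_of_pos (Real.exp_pos _)]
        have hb1 : |1 + φ j * Real.exp (-σ j * t)| ≤ 1 + φM := by
          rw [abs_of_pos (by nlinarith [mul_pos (hφ j) (Real.exp_pos (-σ j * t))] : (0:ℝ) < 1 + φ j * Real.exp (-σ j * t))]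
          have : φ j * Real.exp (-σ j * t) ≤ φM * 1 :=
            mul_le_mul (hφM j) (hexp1 j) (Real.exp_pos _).le hφM0
          linarith
        calc |1 + φ j * Real.exp (-σ j * t)| * (Real.exp (-δ j * t) * |γ j|)
            ≤ (1 + φM) * (Real.exp (-c * t) * |γ j|) := by
              apply mul_le_mul hb1 _ (by positivity) (by linarith)
              exact mul_le_mul_of_nonneg_right (hexpd j) (abs_nonneg _)
          _ = Real.exp (-c * t) * ((1 + φM) * |γ j|) := by ring
      calc |r j| ≤ |φ j * Real.exp (-σ j * t) * x t j|
            + |(1 + φ j * Real.exp (-σ j * t)) * (Real.exp (-δ j * t) * γ j)| := abs_add_le _ _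
        _ ≤ Real.exp (-c * t) * (φM * |x t j|) + Real.exp (-c * t) * ((1 + φM) * |γ j|) := by
            linarith [e1, e2]
        _ ≤ Real.exp (-c * t) * (φM * (|w j| + |η|) + (1 + φM) * |γ j|) := by
            have := mul_le_mul_of_nonneg_left hxj hφM0
            nlinarith [hec0.le]
    -- componentwise squares bounded by U
    have hwsq : ∀ i, w i ^ 2 ≤ U t := by
      intro i
      exact Finset.single_le_sum (fun j _ => sq_nonneg (x t j - η)) (Finset.mem_univ i)
    -- bound the cross term
    have h2 : |∑ i, w i * (L.mulVec r) i| ≤ Ksum * (Real.exp (-c * t) * (U t + 1)) := by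
      have step : ∀ i, |w i * (L.mulVec r) i|
          ≤ ∑ j, |L i j| * (φM + φM * |η| + (1 + φM) * |γ j|)
              * (Real.exp (-c * t) * (U t + 1)) := by
        intro i
        calc |w i * (L.mulVec r) i| = |∑ j, w i * (L i j * r j)| := by
              simp only [Matrix.mulVec, dotProduct, Finset.mul_sum]
          _ ≤ ∑ j, |w i * (L i j * r j)| := Finset.abs_sum_le_sum_abs _ _
          _ ≤ ∑ j, |L i j| * (φM + φM * |η| + (1 + φM) * |γ j|)
              * (Real.exp (-c * t) * (U t + 1)) := by
              apply Finset.sum_le_sum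
              intro j _
              rw [abs_mul, abs_mul]
              have hwiwj : |w i| * |w j| ≤ U t := by
                nlinarith [hwsq i, hwsq j, sq_abs (w i), sq_abs (w j),
                  sq_nonneg (|w i| - |w j|)]
              have hwi1 : |w i| ≤ U t + 1 := by
                nlinarith [hwsq i, sq_abs (w i), sq_nonneg (|w i| - 1), hU0 t]
              have hbig : |w i| * |r j|
                  ≤ Real.exp (-c * t) * ((φM + φM * |η| + (1 + φM) * |γ j|) * (U t + 1)) := by
                calc |w i| * |r j|
                    ≤ |w i| * (Real.exp (-c * t) * (φM * (|w j| + |η|) + (1 + φM) * |γ j|)) :=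
                      mul_le_mul_of_nonneg_left (hrb j) (abs_nonneg _)
                  _ = Real.exp (-c * t) * (φM * (|w i| * |w j|)
                      + (φM * |η| + (1 + φM) * |γ j|) * |w i|) := by ring
                  _ ≤ Real.exp (-c * t) * ((φM + φM * |η| + (1 + φM) * |γ j|) * (U t + 1)) := by
                      apply mul_le_mul_of_nonneg_left _ hec0.le
                      have b1 : φM * (|w i| * |w j|) ≤ φM * (U t + 1) := by
                        apply mul_le_mul_of_nonneg_left _ hφM0
                        linarith [hwiwj, hU0 t]
                      have b2 : (φM * |η| + (1 + φM) * |γ j|) * |w i|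
                          ≤ (φM * |η| + (1 + φM) * |γ j|) * (U t + 1) := by
                        apply mul_le_mul_of_nonneg_left hwi1 (by positivity)
                      have expand : (φM + φM * |η| + (1 + φM) * |γ j|) * (U t + 1)
                          = φM * (U t + 1) + (φM * |η| + (1 + φM) * |γ j|) * (U t + 1) := by
                        ring
                      rw [expand]
                      linarith [b1, b2]
              calc |w i| * (|L i j| * |r j|) = |L i j| * (|w i| * |r j|) := by ring
                _ ≤ |L i j| * (Real.exp (-c * t)
                    * ((φM + φM * |η| + (1 + φM) * |γ j|) * (U t + 1))) :=
                    mul_le_mul_of_nonneg_left hbig (abs_nonneg _)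
                _ = |L i j| * (φM + φM * |η| + (1 + φM) * |γ j|)
                    * (Real.exp (-c * t) * (U t + 1)) := by ring
      calc |∑ i, w i * (L.mulVec r) i| ≤ ∑ i, |w i * (L.mulVec r) i| :=
            Finset.abs_sum_le_sum_abs _ _
        _ ≤ ∑ i, ∑ j, |L i j| * (φM + φM * |η| + (1 + φM) * |γ j|)
            * (Real.exp (-c * t) * (U t + 1)) := Finset.sum_le_sum fun i _ => step i
        _ = Ksum * (Real.exp (-c * t) * (U t + 1)) := by
            rw [hKsumdef, Finset.sum_mul]
            exact Finset.sum_congr rfl fun i _ => (Finset.sum_mul _ _ _).symm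
      -- end h2
    have h2' : (-2) * (∑ i, w i * (L.mulVec r) i) ≤ K * Real.exp (-c * t) * (U t + 1) := by
      rw [hKdef]
      nlinarith [h2, neg_abs_le (∑ i, w i * (L.mulVec r) i)]
    linarith [h2', h1]
  -- the integrating factor
  set E : ℝ → ℝ := fun s => Real.exp (K / c * Real.exp (-c * s)) with hEdef
  have hEpos : ∀ s, 0 < E s := fun s => Real.exp_pos _
  have hEderiv : ∀ s, HasDerivAt E (-(K * Real.exp (-c * s)) * E s) s := by
    intro s
    have h1 : HasDerivAt (fun u : ℝ => -c * u) (-c) s := by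
      simpa using (hasDerivAt_id s).const_mul (-c)
    have h2 : HasDerivAt (fun u => Real.exp (-c * u)) (Real.exp (-c * s) * (-c)) s := h1.exp
    have h3 : HasDerivAt (fun u => K / c * Real.exp (-c * u))
        (K / c * (Real.exp (-c * s) * (-c))) s := h2.const_mul _
    have h4 := h3.exp
    convert h4 using 1
    rw [hEdef]
    field_simp
  set V : ℝ → ℝ := fun s => (U s + 1) * E s with hVdef
  have hVderiv : ∀ t ∈ Set.Ici t₀, HasDerivAt V
      ((∑ i, 2 * (x t i - η) * F t i) * E t + (U t + 1) * (-(K * Real.exp (-c * t)) * E t)) t :=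
    fun t ht => ((hUderiv t ht).add_const 1).mul (hEderiv t)
  have hVanti : AntitoneOn V (Set.Ici t₀) := by
    apply antitoneOn_of_deriv_nonpos (convex_Ici t₀)
    · intro s hs
      exact (hVderiv s hs).continuousAt.continuousWithinAt
    · intro s hs
      rw [interior_Ici] at hs
      exact (hVderiv s (Set.mem_Ici.mpr (le_of_lt hs))).differentiableAt.differentiableWithinAt
    · intro s hs
      rw [interior_Ici] at hs
      rw [(hVderiv s (Set.mem_Ici.mpr (le_of_lt hs))).deriv]
      have hk := hkey s (Set.mem_Ici.mpr (le_of_lt hs))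
      have h5 : (∑ i, 2 * (x s i - η) * F s i) * E s
          ≤ (K * Real.exp (-c * s) * (U s + 1)) * E s :=
        mul_le_mul_of_nonneg_right hk (hEpos s).le
      nlinarith [h5]
  have hUbound : ∀ t ∈ Set.Ici t₀, U t + 1 ≤ V t₀ := by
    intro t ht
    have h1 : V t ≤ V t₀ := hVanti self_mem_Ici ht ht
    have hE1 : 1 ≤ E t := Real.one_le_exp (by positivity)
    have : U t + 1 ≤ (U t + 1) * E t := le_mul_of_one_le_right (by linarith [hU0 t]) hE1
    calc U t + 1 ≤ (U t + 1) * E t := this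
      _ = V t := rfl
      _ ≤ V t₀ := h1
  -- conclude
  have hV0 : 0 ≤ V t₀ := le_trans (by linarith [hU0 t₀]) (hUbound t₀ self_mem_Ici)
  refine ⟨V t₀ / 2 + |η|, fun t ht => ?_⟩
  rw [pi_norm_le_iff_of_nonneg (by linarith [hV0, abs_nonneg η])]
  intro i
  rw [Real.norm_eq_abs]
  have hwsq : (x t i - η) ^ 2 ≤ U t :=
    Finset.single_le_sum (fun j _ => sq_nonneg (x t j - η)) (Finset.mem_univ i)
  have habs : |x t i - η| ≤ (U t + 1) / 2 := by
    nlinarith [sq_abs (x t i - η), sq_nonneg (|x t i - η| - 1), hwsq]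
  have : |x t i| ≤ |x t i - η| + |η| := by
    calc |x t i| = |(x t i - η) + η| := by ring_nf
      _ ≤ |x t i - η| + |η| := abs_add_le _ _
  linarith [hUbound t ht]
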